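/- Let N = (D, s, t) be a network and let P be a finite family (multiset) of s–t paths in D. If P is regimented, then there is no P-multicolored s–t path in D. -/

import Mathlib

/-- The edges of a path given as a list of vertices: the pairs of consecutive vertices. -/
def pathEdges {V : Type*} (l : List V) : List (V × V) := l.zip l.tail

/-- `l` is a path from `s` to `v` in the digraph with edge relation `E`: a list of pairwise
distinct vertices, starting at `s`, ending at `v`, consecutive vertices joined by edges. -/
def IsPath {V : Type*} (E : V → V → Prop) (s v : V) (l : List V) : Prop :=
  l.Nodup ∧ l.head? = some s ∧ l.getLast? = some v ∧ l.Chain' E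

/-- Two `s`–`t` paths are innerly disjoint if they share no vertex other than `s` and `t`. -/
def InnerlyDisjoint {V : Type*} (s t : V) (p q : List V) : Prop :=
  ∀ x ∈ p, x ∈ q → x = s ∨ x = t

/-- A family `P` of `N` `s`–`t` paths is regimented if there are pairwise innerly disjoint
`s`–`t` paths `Q_1, …, Q_k` and a partition of the index set (given by `f`) such that every
path of `P` with index in the `j`-th part equals `Q_j`, and the `j`-th part has exactly
`|E(Q_j)| - 1` elements. -/
def Regimented {V : Type*} (E : V → V → Prop) (s t : V) {N : ℕ} (P : Fin N → List V) : Prop :=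
  ∃ (k : ℕ) (Q : Fin k → List V) (f : Fin N → Fin k),
    (∀ j, IsPath E s t (Q j)) ∧
    (∀ j j', j ≠ j' → InnerlyDisjoint s t (Q j) (Q j')) ∧
    (∀ i, P i = Q (f i)) ∧
    (∀ j, (Finset.univ.filter (fun i => f i = j)).card = (pathEdges (Q j)).length - 1)

/-- A path `R` is `P`-multicolored (each path of the family being its own color class) if
there is an injection assigning to each edge of `R` a distinct index `i` such that the edge
lies on the path `P i`. -/
def MulticoloredFam {V : Type*} {N : ℕ} (P : Fin N → List V) (R : List V) : Prop :=
  ∃ g : Fin (pathEdges R).length → Fin N, Function.Injective g ∧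
    ∀ e : Fin (pathEdges R).length, (pathEdges R).get e ∈ pathEdges (P (g e))



lemma mem_of_getLast?_eq {α} {l : List α} {a : α} (h : l.getLast? = some a) : a ∈ l := by
  have hne : l ≠ [] := by rintro rfl; simp at h
  rw [List.getLast?_eq_getLast hne, Option.some_inj] at h
  exact h ▸ List.getLast_mem hne

lemma pathEdges_cons_cons {V : Type*} (a b : V) (l : List V) :
    pathEdges (a :: b :: l) = (a, b) :: pathEdges (b :: l) := by
  simp [pathEdges]

lemma mem_of_mem_pathEdges {V : Type*} {l : List V} {u v : V}
    (h : (u, v) ∈ pathEdges l) : u ∈ l ∧ v ∈ l := by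
  have := List.of_mem_zip h
  exact ⟨this.1, List.mem_of_mem_tail this.2⟩

lemma pathEdges_length {V : Type*} {l : List V} (h : l ≠ []) :
    (pathEdges l).length + 1 = l.length := by
  cases l with
  | nil => simp at h
  | cons a l => simp [pathEdges]

lemma pathEdges_getElem {V : Type*} {l : List V} {i : ℕ} (h : i < (pathEdges l).length)
    (h1 : i < l.length) (h2 : i + 1 < l.length) :
    (pathEdges l)[i]'h = (l[i], l[i + 1]) := by
  unfold pathEdges at h ⊢
  rw [List.getElem_zip]
  congr 1
  exact List.getElem_tail ..

lemma eq_singleton_of_head_last {V : Type*} {l : List V} {a : V}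
    (hnd : l.Nodup) (hh : l.head? = some a) (hl : l.getLast? = some a) : l = [a] := by
  cases l with
  | nil => simp at hh
  | cons x xs =>
    simp only [List.head?_cons, Option.some_inj] at hh
    subst hh
    cases xs with
    | nil => rfl
    | cons y ys =>
      exfalso
      rw [List.getLast?_cons_cons] at hl
      have : x ∈ y :: ys := mem_of_getLast?_eq hl
      simp only [List.mem_cons] at this
      simp at hnd
      tauto

lemma first_edge {V : Type*} {a b : V} {l : List V}
    (hnd : (a :: l).Nodup) (h : (a, b) ∈ pathEdges (a :: l)) :
    l.head? = some b := by
  cases l with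
  | nil => simp [pathEdges] at h
  | cons c cs =>
    rw [pathEdges_cons_cons] at h
    rcases List.mem_cons.1 h with h | h
    · simp only [Prod.mk.injEq] at h
      simp [h.2]
    · exfalso
      have := (mem_of_mem_pathEdges h).1
      simp only [List.mem_cons] at this
      simp at hnd
      tauto

lemma path_eq_of_edges_subset {V : Type*} (t : V) :
    ∀ (R : List V), ∀ (Q : List V), R.Nodup → Q.Nodup →
      R.head? = Q.head? → R.getLast? = some t → Q.getLast? = some t →
      (∀ e ∈ pathEdges R, e ∈ pathEdges Q) → R = Q := by
  intro R
  induction R with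
  | nil => intro Q _ _ _ hl _ _; simp at hl
  | cons a R' ih =>
    intro Q hndR hndQ hh hl hQl hsub
    obtain ⟨Q', rfl⟩ : ∃ Q', Q = a :: Q' := by
      cases Q with
      | nil => simp at hh
      | cons q Q' =>
        simp only [List.head?_cons, Option.some_inj] at hh
        exact ⟨Q', by rw [hh]⟩
    cases R' with
    | nil =>
      have : a = t := by simpa using hl
      subst this
      exact (eq_singleton_of_head_last hndQ rfl hQl).symm
    | cons b R'' =>
      have hab : (a, b) ∈ pathEdges (a :: Q') :=
        hsub (a, b) (by rw [pathEdges_cons_cons]; exact List.mem_cons_self)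
      have hb := first_edge hndQ hab
      obtain ⟨Q'', rfl⟩ : ∃ Q'', Q' = b :: Q'' := by
        cases Q' with
        | nil => simp at hb
        | cons c cs =>
          simp only [List.head?_cons, Option.some_inj] at hb
          exact ⟨cs, by rw [hb]⟩
      congr 1
      apply ih (b :: Q'') (List.Nodup.of_cons hndR) (List.Nodup.of_cons hndQ) rfl
      · rw [List.getLast?_cons_cons] at hl; exact hl
      · rw [List.getLast?_cons_cons] at hQl; exact hQl
      · intro e he
        have he' : e ∈ pathEdges (a :: b :: Q'') :=
          hsub e (by rw [pathEdges_cons_cons]; exact List.mem_cons_of_mem _ he)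
        rw [pathEdges_cons_cons] at he'
        rcases List.mem_cons.1 he' with h | h
        · exfalso
          subst h
          have := (mem_of_mem_pathEdges he).1
          simp only [List.mem_cons] at this
          simp at hndR
          tauto
        · exact h

theorem regimented_no_multicolored' {V : Type*} [Fintype V] (E : V → V → Prop) (s t : V)
    (hst : s ≠ t) (hs : ∀ u v, E u v → v ≠ s) (ht : ∀ u v, E u v → u ≠ t)
    {N : ℕ} (P : Fin N → List V) (hP : ∀ i, IsPath E s t (P i))
    (hreg : Regimented E s t P) :
    ¬ ∃ R : List V, IsPath E s t R ∧ MulticoloredFam P R := by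
  rintro ⟨R, ⟨hRnd, hRh, hRl, -⟩, g, hginj, hg⟩
  obtain ⟨k, Q, f, hQpath, hdisj, hPf, hcard⟩ := hreg
  have hRne : R ≠ [] := by rintro rfl; simp at hRh
  have hlen : (pathEdges R).length + 1 = R.length := pathEdges_length hRne
  have hm1 : 1 ≤ (pathEdges R).length := by
    by_contra h
    have hR1 : R.length = 1 := by omega
    obtain ⟨a, rfl⟩ := List.length_eq_one_iff.mp hR1
    simp only [List.head?_cons, Option.some_inj] at hRh
    simp only [List.getLast?_singleton, Option.some_inj] at hRl
    subst hRh
    exact hst hRl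
  have hs0 : R[0]'(by omega) = s := by
    cases R with
    | nil => simp at hRne
    | cons a l => simpa using hRh
  have htl : R[R.length - 1]'(by omega) = t := by
    have h' := hRl
    rw [List.getLast?_eq_getLast hRne, Option.some_inj] at h'
    rw [← h', List.getLast_eq_getElem]
  have hedge : ∀ (n : ℕ) (hn : n < (pathEdges R).length),
      (pathEdges R).get ⟨n, hn⟩ = (R[n]'(by omega), R[n + 1]'(by omega)) := by
    intro n hn
    rw [List.get_eq_getElem]
    exact pathEdges_getElem hn (by omega) (by omega)
  have hconst : ∀ (n : ℕ) (hn : n < (pathEdges R).length),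
      f (g ⟨n, hn⟩) = f (g ⟨0, hm1⟩) := by
    intro n
    induction n with
    | zero => intro hn; rfl
    | succ n ihn =>
      intro hn
      have hn' : n < (pathEdges R).length := by omega
      rw [← ihn hn']
      by_contra hne
      have hv1 : R[n + 1]'(by omega) ∈ Q (f (g ⟨n, hn'⟩)) := by
        have h1 := hg ⟨n, hn'⟩
        rw [hPf, hedge n hn'] at h1
        exact (mem_of_mem_pathEdges h1).2
      have hv2 : R[n + 1]'(by omega) ∈ Q (f (g ⟨n + 1, hn⟩)) := by
        have h2 := hg ⟨n + 1, hn⟩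
        rw [hPf, hedge (n + 1) hn] at h2
        exact (mem_of_mem_pathEdges h2).1
      rcases hdisj _ _ hne _ hv2 hv1 with h | h
      · have h0 : R[n + 1]'(by omega) = R[0]'(by omega) := by rw [h, hs0]
        have := (List.Nodup.getElem_inj_iff hRnd).1 h0
        omega
      · have h0 : R[n + 1]'(by omega) = R[R.length - 1]'(by omega) := by rw [h, htl]
        have := (List.Nodup.getElem_inj_iff hRnd).1 h0
        omega
  have hconstF : ∀ p : Fin (pathEdges R).length, f (g p) = f (g ⟨0, hm1⟩) :=
    fun p => hconst p.1 p.2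
  have hsub : ∀ e ∈ pathEdges R, e ∈ pathEdges (Q (f (g ⟨0, hm1⟩))) := by
    intro e he
    obtain ⟨p, hp⟩ := List.mem_iff_get.1 he
    have h1 := hg p
    rw [hPf, hconstF p, hp] at h1
    exact h1
  have hReq : R = Q (f (g ⟨0, hm1⟩)) :=
    path_eq_of_edges_subset t R _ hRnd (hQpath _).1
      (by rw [hRh, (hQpath _).2.1]) hRl (hQpath _).2.2.1 hsub
  have hcard0 := hcard (f (g ⟨0, hm1⟩))
  rw [← hReq] at hcard0
  have himg : Finset.univ.image g ⊆
      Finset.univ.filter (fun i => f i = f (g ⟨0, hm1⟩)) := by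
    intro i hi
    simp only [Finset.mem_image] at hi
    obtain ⟨p, -, rfl⟩ := hi
    simp [hconstF p]
  have hle := Finset.card_le_card himg
  rw [Finset.card_image_of_injective _ hginj, Finset.card_univ, Fintype.card_fin, hcard0] at hle
  omega

/-- In a network `(D, s, t)`, a regimented family of `s`–`t` paths admits no
`P`-multicolored `s`–`t` path. -/
theorem regimented_no_multicolored {V : Type*} [Fintype V] (E : V → V → Prop) (s t : V)
    (hst : s ≠ t) (hs : ∀ u v, E u v → v ≠ s) (ht : ∀ u v, E u v → u ≠ t)
    {N : ℕ} (P : Fin N → List V) (hP : ∀ i, IsPath E s t (P i))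
    (hreg : Regimented E s t P) :
    ¬ ∃ R : List V, IsPath E s t R ∧ MulticoloredFam P R :=
  regimented_no_multicolored' E s t hst hs ht P hP hreg
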